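/- arXiv:2505.06828 — 5 statements merged into one kernel-verified Lean document; each statement's English description precedes it below -/
import Mathlib

section
/- In a metric space, for any cycle C = x_1 x_2 ... x_q x_1 on q vertices (with weight w(C) = Σ_i w(x_i, x_{i+1}), indices mod q) contained in a set X, and any finite set Y with |Y| = n, the inequality n·w(C) ≤ 2·Σ_{i=1}^{q} Σ_{y∈Y} w(x_i, y) holds. -/
/-- For any cycle `C = x_1 ... x_q x_1` (encoded by a `q`-periodic
vertex map `x : ℕ → V`) with weight `w(C) = Σ_{i<q} w(x_i, x_{i+1})`, and any
finite set `Y` with `|Y| = n`, we have `n·w(C) ≤ 2·Σ_{i<q} Σ_{y∈Y} w(x_i, y)`. -/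
theorem stmt_1 {V : Type*} (w : V → V → ℝ)
    (hnn : ∀ a b, 0 ≤ w a b)
    (hsymm : ∀ a b, w a b = w b a)
    (htri : ∀ a b c, w a c ≤ w a b + w b c)
    (q : ℕ) (hq : 1 ≤ q) (x : ℕ → V) (hper : ∀ j, x (j + q) = x j)
    (Y : Finset V) (n : ℕ) (hY : Y.card = n) :
    (n : ℝ) * ∑ i ∈ Finset.range q, w (x i) (x (i + 1)) ≤
      2 * ∑ i ∈ Finset.range q, ∑ y ∈ Y, w (x i) y := by
  set f : ℕ → ℝ := fun i => ∑ y ∈ Y, w (x i) y with hf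
  have hshift : ∑ i ∈ Finset.range q, f (i + 1) = ∑ i ∈ Finset.range q, f i := by
    have hx : x q = x 0 := by simpa using hper 0
    have h1 : ∑ i ∈ Finset.range (q + 1), f i
        = (∑ i ∈ Finset.range q, f (i + 1)) + f 0 := by
      exact Finset.sum_range_succ' f q
    have h2 : ∑ i ∈ Finset.range (q + 1), f i
        = (∑ i ∈ Finset.range q, f i) + f q := Finset.sum_range_succ f q
    have hfq : f q = f 0 := by simp [hf, hx]
    linarith [h1, h2.symm]
  have key : ∀ i, (n : ℝ) * w (x i) (x (i + 1)) ≤ f i + f (i + 1) := by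
    intro i
    have : ∑ y ∈ Y, w (x i) (x (i + 1)) ≤ ∑ y ∈ Y, (w (x i) y + w (x (i + 1)) y) := by
      refine Finset.sum_le_sum fun y _ => ?_
      calc w (x i) (x (i + 1)) ≤ w (x i) y + w y (x (i + 1)) := htri _ _ _
        _ = w (x i) y + w (x (i + 1)) y := by rw [hsymm y]
    simpa [Finset.sum_const, hY, Finset.sum_add_distrib, mul_comm] using this
  calc (n : ℝ) * ∑ i ∈ Finset.range q, w (x i) (x (i + 1))
      = ∑ i ∈ Finset.range q, (n : ℝ) * w (x i) (x (i + 1)) := Finset.mul_sum _ _ _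
    _ ≤ ∑ i ∈ Finset.range q, (f i + f (i + 1)) := Finset.sum_le_sum fun i _ => key i
    _ = (∑ i ∈ Finset.range q, f i) + ∑ i ∈ Finset.range q, f (i + 1) :=
        Finset.sum_add_distrib
    _ = 2 * ∑ i ∈ Finset.range q, f i := by rw [hshift]; ring
end

section
/- Let C be a cycle on 3k vertices x_0, x_1, ..., x_{3k-1} (indices mod 3k), with edge weights w and vertex costs δ. For r ∈ {0,1,2}, let P_r be the 3-path decomposition obtained by deleting every third edge starting at offset r, i.e., deleting edges {x_{3i+r} x_{3i+r+1} : 0 ≤ i < k}; each P_r consists of k vertex-disjoint 3-paths with total edge weight w(P_r) and terminal cost δ(P_r) = sum of δ over the 2k path endpoints. Then min_{r∈{0,1,2}} ( δ(P_r) + M·w(P_r) ) ≤ (2/3)·Σ_{i} δ(x_i) + (2/3)·M·w(C) for any M ≥ 0. -/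
/-- Let `C` be a cycle on `3k` vertices `x_0, ..., x_{3k-1}` with
vertex costs `δ j` and edge weights `e i` (edge `i` joins `x_i` and `x_{i+1}`,
indices mod `3k`). For an offset `r ∈ {0,1,2}` delete the edges with index
`≡ r (mod 3)`; the surviving edges are those with `i % 3 ≠ r` and the terminals
of the resulting 3-paths are the vertices with `j % 3 ≠ r + 2 (mod 3)`.
Then some offset `r` satisfies
`δ(P_r) + M·w(P_r) ≤ (2/3)·Σ_j δ(x_j) + (2/3)·M·w(C)` for any `M ≥ 0`. -/
theorem stmt_4 (k : ℕ) (hk : 1 ≤ k)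
    (δ : Fin (3 * k) → ℝ) (hδ : ∀ j, 0 ≤ δ j)
    (e : Fin (3 * k) → ℝ) (he : ∀ i, 0 ≤ e i)
    (M : ℝ) (hM : 0 ≤ M) :
    ∃ r : Fin 3,
      (∑ j ∈ Finset.univ.filter (fun j : Fin (3 * k) => (j : ℕ) % 3 ≠ ((r : ℕ) + 2) % 3), δ j)
        + M * (∑ i ∈ Finset.univ.filter (fun i : Fin (3 * k) => (i : ℕ) % 3 ≠ (r : ℕ)), e i)
      ≤ (2 / 3) * (∑ j, δ j) + (2 / 3) * M * (∑ i, e i) := by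
  by_contra h
  push_neg at h
  set RHS := (2 / 3) * (∑ j, δ j) + (2 / 3) * M * (∑ i, e i) with hRHS
  have hA : ∑ r : Fin 3, ∑ j ∈ Finset.univ.filter
      (fun j : Fin (3 * k) => (j : ℕ) % 3 ≠ ((r : ℕ) + 2) % 3), δ j
      = 2 * ∑ j, δ j := by
    simp only [Finset.sum_filter]
    rw [Finset.sum_comm]
    rw [Finset.mul_sum]
    refine Finset.sum_congr rfl fun j _ => ?_
    have hj : (j : ℕ) % 3 = 0 ∨ (j : ℕ) % 3 = 1 ∨ (j : ℕ) % 3 = 2 := by omega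
    rcases hj with hj | hj | hj <;>
      · rw [Fin.sum_univ_three] <;> simp [hj] <;> ring
  have hB : ∑ r : Fin 3, ∑ i ∈ Finset.univ.filter
      (fun i : Fin (3 * k) => (i : ℕ) % 3 ≠ (r : ℕ)), e i
      = 2 * ∑ i, e i := by
    simp only [Finset.sum_filter]
    rw [Finset.sum_comm]
    rw [Finset.mul_sum]
    refine Finset.sum_congr rfl fun i _ => ?_
    have hi : (i : ℕ) % 3 = 0 ∨ (i : ℕ) % 3 = 1 ∨ (i : ℕ) % 3 = 2 := by omega
    rcases hi with hi | hi | hi <;>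
      · rw [Fin.sum_univ_three] <;> simp [hi] <;> ring
  have hsum : ∑ r : Fin 3,
      ((∑ j ∈ Finset.univ.filter (fun j : Fin (3 * k) => (j : ℕ) % 3 ≠ ((r : ℕ) + 2) % 3), δ j)
        + M * (∑ i ∈ Finset.univ.filter (fun i : Fin (3 * k) => (i : ℕ) % 3 ≠ (r : ℕ)), e i))
      = 3 * RHS := by
    rw [Finset.sum_add_distrib, hA, ← Finset.mul_sum, hB, hRHS]
    ring
  have hlt : 3 * RHS < ∑ r : Fin 3,
      ((∑ j ∈ Finset.univ.filter (fun j : Fin (3 * k) => (j : ℕ) % 3 ≠ ((r : ℕ) + 2) % 3), δ j)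
        + M * (∑ i ∈ Finset.univ.filter (fun i : Fin (3 * k) => (i : ℕ) % 3 ≠ (r : ℕ)), e i)) := by
    have := Finset.sum_lt_sum_of_nonempty (s := (Finset.univ : Finset (Fin 3)))
      (f := fun _ => RHS) ⟨0, Finset.mem_univ 0⟩ (fun r _ => h r)
    simpa using this
  linarith [hsum ▸ hlt]
end

section
/- Let x be a point and let C' be a finite family of cycles, each containing x and at most 3 other points, all drawn from a finite set Y' (of size divisible by 3), such that the cycles pairwise share only the point x and together cover Y'. Split C' into the 4-cycles C'₄, 3-cycles C'₃ and 2-cycles C'₂ through x. Then Σ_{y∈Y'} w(x,y) ≤ Σ_{x y₁ y₂ y₃ x ∈ C'₄}( w(x,y₁) + w(x,y₃) ) + (1/2)·w(C'₄) + w(C'₃) + (1/2)·w(C'₂), where w(C'ᵢ) denotes the total edge weight of all cycles in C'ᵢ. -/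
/-- Let `x` be a point and let a family of cycles through `x`
(4-cycles indexed by `I4`, 3-cycles by `I3`, 2-cycles by `I2`), pairwise
sharing only `x`, cover a finite set `Y'` (of size divisible by 3) not
containing `x`; the vertices other than `x` are encoded by the injective map
`F` with range `Y'`. Then
`Σ_{y∈Y'} w(x,y) ≤ Σ_{4-cycles}(w(x,y₁)+w(x,y₃)) + (1/2)·w(C'₄) + w(C'₃) + (1/2)·w(C'₂)`. -/
theorem stmt_11 {V : Type*} (w : V → V → ℝ)
    (hnn : ∀ a b, 0 ≤ w a b)
    (hsymm : ∀ a b, w a b = w b a)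
    (htri : ∀ a b c, w a c ≤ w a b + w b c)
    (x : V) (Y' : Finset V) (hx : x ∉ Y') (h3 : 3 ∣ Y'.card)
    {I4 I3 I2 : Type*} [Fintype I4] [Fintype I3] [Fintype I2]
    (F : (I4 × Fin 3) ⊕ (I3 × Fin 2) ⊕ I2 → V)
    (hinj : Function.Injective F)
    (hcover : ∀ v : V, v ∈ Y' ↔ v ∈ Set.range F) :
    ∑ y ∈ Y', w x y ≤
      (∑ c : I4, (w x (F (Sum.inl (c, 0))) + w x (F (Sum.inl (c, 2)))))
      + (1 / 2) * (∑ c : I4,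
          (w x (F (Sum.inl (c, 0))) + w (F (Sum.inl (c, 0))) (F (Sum.inl (c, 1)))
            + w (F (Sum.inl (c, 1))) (F (Sum.inl (c, 2))) + w (F (Sum.inl (c, 2))) x))
      + (∑ c : I3,
          (w x (F (Sum.inr (Sum.inl (c, 0)))) +
            w (F (Sum.inr (Sum.inl (c, 0)))) (F (Sum.inr (Sum.inl (c, 1)))) +
            w (F (Sum.inr (Sum.inl (c, 1)))) x))
      + (1 / 2) * (∑ c : I2, 2 * w x (F (Sum.inr (Sum.inr c)))) := by
  have key : ∑ y ∈ Y', w x y = ∑ i, w x (F i) := by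
    refine (Finset.sum_bij (fun i _ => F i) ?_ ?_ ?_ ?_).symm
    · intro i _; exact (hcover (F i)).mpr ⟨i, rfl⟩
    · intro a _ b _ h; exact hinj h
    · intro y hy; obtain ⟨i, rfl⟩ := (hcover y).mp hy; exact ⟨i, Finset.mem_univ i, rfl⟩
    · intro i _; rfl
  rw [key, Fintype.sum_sum_type, Fintype.sum_sum_type, Fintype.sum_prod_type,
    Fintype.sum_prod_type]
  have h4 : ∑ c : I4, ∑ j : Fin 3, w x (F (Sum.inl (c, j))) ≤
      (∑ c : I4, (w x (F (Sum.inl (c, 0))) + w x (F (Sum.inl (c, 2)))))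
      + (1 / 2) * (∑ c : I4,
          (w x (F (Sum.inl (c, 0))) + w (F (Sum.inl (c, 0))) (F (Sum.inl (c, 1)))
            + w (F (Sum.inl (c, 1))) (F (Sum.inl (c, 2))) + w (F (Sum.inl (c, 2))) x)) := by
    rw [Finset.mul_sum, ← Finset.sum_add_distrib]
    refine Finset.sum_le_sum fun c _ => ?_
    rw [Fin.sum_univ_three]
    have t1 := htri x (F (Sum.inl (c, 0))) (F (Sum.inl (c, 1)))
    have t2 := htri x (F (Sum.inl (c, 2))) (F (Sum.inl (c, 1)))
    have s1 := hsymm (F (Sum.inl (c, 2))) (F (Sum.inl (c, 1)))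
    have s2 := hsymm (F (Sum.inl (c, 2))) x
    linarith
  have h3' : ∑ c : I3, ∑ j : Fin 2, w x (F (Sum.inr (Sum.inl (c, j)))) ≤
      ∑ c : I3,
          (w x (F (Sum.inr (Sum.inl (c, 0)))) +
            w (F (Sum.inr (Sum.inl (c, 0)))) (F (Sum.inr (Sum.inl (c, 1)))) +
            w (F (Sum.inr (Sum.inl (c, 1)))) x) := by
    refine Finset.sum_le_sum fun c _ => ?_
    rw [Fin.sum_univ_two]
    have := hnn (F (Sum.inr (Sum.inl (c, 0)))) (F (Sum.inr (Sum.inl (c, 1))))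
    have := hsymm x (F (Sum.inr (Sum.inl (c, 1))))
    linarith
  have h2 : ∑ c : I2, w x (F (Sum.inr (Sum.inr c))) ≤
      (1 / 2) * (∑ c : I2, 2 * w x (F (Sum.inr (Sum.inr c)))) := by
    rw [Finset.mul_sum]
    refine Finset.sum_le_sum fun c _ => ?_
    ring_nf
    exact le_refl _
  linarith
end

section
/- With the setup of the previous statement (a family C' = C'₄ ∪ C'₃ ∪ C'₂ of cycles through x covering Y', |Y'| divisible by 3), define W = Σ_{x y₁ y₂ y₃ x ∈ C'₄} ( w(y₁,y₂) + w(y₂,y₃) + w(y₃,y₁) ) + w(C'₃) + w(C'₂) (the weight of the cycle packing in Y' obtained from C' by shortcutting x). Then δ_{Y'}(x) + (1/2)·W ≤ (3/2)·w(C'), where δ_{Y'}(x) = Σ_{y∈Y'} w(x,y). -/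
/-- With the setup of Statement 11 (a family `C' = C'₄ ∪ C'₃ ∪ C'₂`
of cycles through `x`, pairwise sharing only `x` and covering `Y'` of size
divisible by 3), let `W` be the weight of the cycle packing of `Y'` obtained by
shortcutting `x` (triangles `y₁y₂y₃y₁` from the 4-cycles, plus `w(C'₃)+w(C'₂)`).
Then `δ_{Y'}(x) + (1/2)·W ≤ (3/2)·w(C')`. -/
theorem stmt_12 {V : Type*} (w : V → V → ℝ)
    (hnn : ∀ a b, 0 ≤ w a b)
    (hsymm : ∀ a b, w a b = w b a)
    (htri : ∀ a b c, w a c ≤ w a b + w b c)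
    (x : V) (Y' : Finset V) (hx : x ∉ Y') (h3 : 3 ∣ Y'.card)
    {I4 I3 I2 : Type*} [Fintype I4] [Fintype I3] [Fintype I2]
    (F : (I4 × Fin 3) ⊕ (I3 × Fin 2) ⊕ I2 → V)
    (hinj : Function.Injective F)
    (hcover : ∀ v : V, v ∈ Y' ↔ v ∈ Set.range F) :
    (∑ y ∈ Y', w x y)
      + (1 / 2) * ((∑ c : I4,
            (w (F (Sum.inl (c, 0))) (F (Sum.inl (c, 1)))
              + w (F (Sum.inl (c, 1))) (F (Sum.inl (c, 2)))
              + w (F (Sum.inl (c, 2))) (F (Sum.inl (c, 0)))))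
          + (∑ c : I3,
              (w x (F (Sum.inr (Sum.inl (c, 0)))) +
                w (F (Sum.inr (Sum.inl (c, 0)))) (F (Sum.inr (Sum.inl (c, 1)))) +
                w (F (Sum.inr (Sum.inl (c, 1)))) x))
          + (∑ c : I2, 2 * w x (F (Sum.inr (Sum.inr c))))) ≤
      (3 / 2) * ((∑ c : I4,
            (w x (F (Sum.inl (c, 0))) + w (F (Sum.inl (c, 0))) (F (Sum.inl (c, 1)))
              + w (F (Sum.inl (c, 1))) (F (Sum.inl (c, 2))) + w (F (Sum.inl (c, 2))) x))
          + (∑ c : I3,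
              (w x (F (Sum.inr (Sum.inl (c, 0)))) +
                w (F (Sum.inr (Sum.inl (c, 0)))) (F (Sum.inr (Sum.inl (c, 1)))) +
                w (F (Sum.inr (Sum.inl (c, 1)))) x))
          + (∑ c : I2, 2 * w x (F (Sum.inr (Sum.inr c))))) := by

  classical
  -- rewrite δ as a sum over the index type
  have hdelta : (∑ y ∈ Y', w x y)
      = ∑ i : (I4 × Fin 3) ⊕ (I3 × Fin 2) ⊕ I2, w x (F i) := by
    refine (Finset.sum_bij (fun i _ => F i) ?_ ?_ ?_ ?_).symm
    · intro i _
      exact (hcover (F i)).2 ⟨i, rfl⟩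
    · intro a _ b _ h
      exact hinj h
    · intro y hy
      obtain ⟨i, hi⟩ := (hcover y).1 hy
      exact ⟨i, Finset.mem_univ i, hi⟩
    · intro i _; rfl
  rw [hdelta, Fintype.sum_sum_type, Fintype.sum_sum_type,
    Fintype.sum_prod_type, Fintype.sum_prod_type]
  simp only [Fin.sum_univ_three, Fin.sum_univ_two]
  have h4 : (∑ c : I4, (w x (F (Sum.inl (c, 0))) + w x (F (Sum.inl (c, 1)))
        + w x (F (Sum.inl (c, 2)))))
      + (1 / 2) * (∑ c : I4,
            (w (F (Sum.inl (c, 0))) (F (Sum.inl (c, 1)))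
              + w (F (Sum.inl (c, 1))) (F (Sum.inl (c, 2)))
              + w (F (Sum.inl (c, 2))) (F (Sum.inl (c, 0)))))
      ≤ (3 / 2) * (∑ c : I4,
            (w x (F (Sum.inl (c, 0))) + w (F (Sum.inl (c, 0))) (F (Sum.inl (c, 1)))
              + w (F (Sum.inl (c, 1))) (F (Sum.inl (c, 2))) + w (F (Sum.inl (c, 2))) x)) := by
    rw [Finset.mul_sum, Finset.mul_sum, ← Finset.sum_add_distrib]
    refine Finset.sum_le_sum fun c _ => ?_
    set y0 := F (Sum.inl (c, (0 : Fin 3)))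
    set y1 := F (Sum.inl (c, (1 : Fin 3)))
    set y2 := F (Sum.inl (c, (2 : Fin 3)))
    have t1 : w x y1 ≤ w x y0 + w y0 y1 := htri x y0 y1
    have t2 : w x y1 ≤ w x y2 + w y2 y1 := htri x y2 y1
    have t3 : w y2 y0 ≤ w y2 y1 + w y1 y0 := htri y2 y1 y0
    have s1 : w x y2 = w y2 x := hsymm x y2
    have s2 : w y2 y1 = w y1 y2 := hsymm y2 y1
    have s3 : w y1 y0 = w y0 y1 := hsymm y1 y0
    linarith
  have h3' : (∑ c : I3, (w x (F (Sum.inr (Sum.inl (c, 0))))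
        + w x (F (Sum.inr (Sum.inl (c, 1))))))
      + (1 / 2) * (∑ c : I3,
              (w x (F (Sum.inr (Sum.inl (c, 0)))) +
                w (F (Sum.inr (Sum.inl (c, 0)))) (F (Sum.inr (Sum.inl (c, 1)))) +
                w (F (Sum.inr (Sum.inl (c, 1)))) x))
      ≤ (3 / 2) * (∑ c : I3,
              (w x (F (Sum.inr (Sum.inl (c, 0)))) +
                w (F (Sum.inr (Sum.inl (c, 0)))) (F (Sum.inr (Sum.inl (c, 1)))) +
                w (F (Sum.inr (Sum.inl (c, 1)))) x)) := by
    rw [Finset.mul_sum, Finset.mul_sum, ← Finset.sum_add_distrib]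
    refine Finset.sum_le_sum fun c _ => ?_
    set y0 := F (Sum.inr (Sum.inl (c, (0 : Fin 2))))
    set y1 := F (Sum.inr (Sum.inl (c, (1 : Fin 2))))
    have s1 : w x y1 = w y1 x := hsymm x y1
    have b1 : 0 ≤ w y0 y1 := hnn y0 y1
    linarith
  have h2' : (∑ c : I2, w x (F (Sum.inr (Sum.inr c))))
      + (1 / 2) * (∑ c : I2, 2 * w x (F (Sum.inr (Sum.inr c))))
      ≤ (3 / 2) * (∑ c : I2, 2 * w x (F (Sum.inr (Sum.inr c)))) := by
    rw [Finset.mul_sum, Finset.mul_sum, ← Finset.sum_add_distrib]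
    refine Finset.sum_le_sum fun c _ => ?_
    have := hnn x (F (Sum.inr (Sum.inr c)))
    linarith
  linarith
end

section
/- In the schedule pattern of a normal super-game between super-teams of 3d teams each, where team s_{3i+i'} plays away against t_{3j+j'} on day (6(i+j)+i'+j') mod 6d and home on day (6(i+j)+i'+j'+3) mod 6d (0 ≤ i,j ≤ d−1, 0 ≤ i',j' ≤ 2), every team plays exactly one game on each of the 6d days, each pair (s, t) meets exactly twice (once at each venue), no pair plays on two consecutive days, and no team has more than 3 consecutive home games or 3 consecutive away games within the 6d days. -/
/-- Day (in `ℤ/6dℤ`) on which team `s_a` plays away against `t_b` in a normal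
super-game: `(6(⌊a/3⌋+⌊b/3⌋) + a%3 + b%3) mod 6d`. -/
def awayDay (d : ℕ) (a b : Fin (3 * d)) : ZMod (6 * d) :=
  ((6 * ((a : ℕ) / 3 + (b : ℕ) / 3) + (a : ℕ) % 3 + (b : ℕ) % 3 : ℕ) : ZMod (6 * d))

/-- Day on which team `s_a` plays at home against `t_b`: three days later mod `6d`. -/
def homeDay (d : ℕ) (a b : Fin (3 * d)) : ZMod (6 * d) :=
  awayDay d a b + 3

/-- reduction mod 6 -/
def toZ6 (d : ℕ) : ZMod (6 * d) →+* ZMod 6 := ZMod.castHom ⟨d, rfl⟩ (ZMod 6)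

lemma phi_away (d : ℕ) (a b : Fin (3 * d)) :
    toZ6 d (awayDay d a b) = (((a : ℕ) % 3 + (b : ℕ) % 3 : ℕ) : ZMod 6) := by
  unfold awayDay toZ6
  rw [map_natCast]
  push_cast
  have h6 : (6 : ZMod 6) = 0 := by decide
  rw [h6]; ring

lemma phi_home (d : ℕ) (a b : Fin (3 * d)) :
    toZ6 d (homeDay d a b) = (((a : ℕ) % 3 + (b : ℕ) % 3 : ℕ) : ZMod 6) + 3 := by
  unfold homeDay
  rw [map_add, phi_away, map_ofNat]

lemma away_comm (d : ℕ) (a b : Fin (3 * d)) : awayDay d a b = awayDay d b a := by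
  unfold awayDay; congr 1; omega

lemma no4 (d : ℕ) (c : ZMod 6) (g : Fin (3 * d) → ZMod (6 * d))
    (hg : ∀ x, toZ6 d (g x) = (((x : ℕ) % 3 : ℕ) : ZMod 6) + c) (D : ZMod (6 * d)) :
    ¬ (∀ k : Fin 4, ∃ x, g x = D + ((k : ℕ) : ZMod (6 * d))) := by
  intro h
  obtain ⟨x0, h0⟩ := h 0
  obtain ⟨x3, h3⟩ := h 3
  apply_fun toZ6 d at h0 h3
  rw [hg] at h0 h3
  simp only [map_add, map_natCast, map_zero, add_zero, Fin.val_zero, Nat.cast_zero, Nat.cast_ofNat] at h0 h3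
  have key : (((x3 : ℕ) % 3 : ℕ) : ZMod 6) = (((x0 : ℕ) % 3 : ℕ) : ZMod 6) + 3 := by
    have : ((3 : Fin 4) : ℕ) = 3 := rfl
    rw [this] at h3
    push_cast at h0 h3 ⊢
    linear_combination h3 - h0
  have m0 : (x0 : ℕ) % 3 = 0 ∨ (x0 : ℕ) % 3 = 1 ∨ (x0 : ℕ) % 3 = 2 := by omega
  have m3 : (x3 : ℕ) % 3 = 0 ∨ (x3 : ℕ) % 3 = 1 ∨ (x3 : ℕ) % 3 = 2 := by omega
  rcases m0 with e|e|e <;> rw [e] at key <;>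
    rcases m3 with f|f|f <;> rw [f] at key <;> revert key <;> decide

lemma bij (d : ℕ) (hd : 1 ≤ d) (a : Fin (3 * d)) :
    Function.Bijective (fun p : Fin (3 * d) × Bool =>
      if p.2 then awayDay d a p.1 else homeDay d a p.1) := by
  haveI : NeZero (6 * d) := ⟨by omega⟩
  rw [Fintype.bijective_iff_injective_and_card]
  constructor
  · have hval : ∀ (p : Fin (3 * d) × Bool),
        (if p.2 then awayDay d a p.1 else homeDay d a p.1) =
        ((6 * ((a : ℕ) / 3) + (a : ℕ) % 3 : ℕ) : ZMod (6 * d)) +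
        ((6 * ((p.1 : ℕ) / 3) + (p.1 : ℕ) % 3 + (if p.2 then 0 else 3) : ℕ) : ZMod (6 * d)) := by
      rintro ⟨b, (_|_)⟩ <;> simp [awayDay, homeDay] <;> push_cast <;> ring
    intro p q h
    simp only [hval] at h
    have h2 := add_left_cancel h
    have hp : (6 * ((p.1 : ℕ) / 3) + (p.1 : ℕ) % 3 + (if p.2 then 0 else 3)) < 6 * d := by
      have := p.1.isLt; rcases p.2 <;> simp <;> omega
    have hq : (6 * ((q.1 : ℕ) / 3) + (q.1 : ℕ) % 3 + (if q.2 then 0 else 3)) < 6 * d := by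
      have := q.1.isLt; rcases q.2 <;> simp <;> omega
    have hnat : (6 * ((p.1 : ℕ) / 3) + (p.1 : ℕ) % 3 + (if p.2 then 0 else 3)) =
        (6 * ((q.1 : ℕ) / 3) + (q.1 : ℕ) % 3 + (if q.2 then 0 else 3)) := by
      have := congrArg ZMod.val h2
      rwa [ZMod.val_cast_of_lt hp, ZMod.val_cast_of_lt hq] at this
    obtain ⟨b1, t1⟩ := p
    obtain ⟨b2, t2⟩ := q
    rcases t1 <;> rcases t2 <;> simp at hnat ⊢ <;>
      first
      | (exact Fin.ext (by omega))
      | omega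
  · simp [ZMod.card]; ring

/-- In the normal super-game schedule between `S = {s_0,...,s_{3d−1}}`
and `T = {t_0,...,t_{3d−1}}` on days `0,...,6d−1`: (1) every `s`-team plays
exactly one game per day (the map (opponent, venue) ↦ day is a bijection onto
the `6d` days, so each pair meets exactly once at each venue); (2) likewise for
every `t`-team; (3) no pair plays on two consecutive days; (4) no `s`-team and
no `t`-team has 4 consecutive home days or 4 consecutive away days (bounded-by-3). -/
theorem stmt_14 (d : ℕ) (hd : 1 ≤ d) :
    (∀ a : Fin (3 * d),
      Function.Bijective (fun p : Fin (3 * d) × Bool =>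
        if p.2 then awayDay d a p.1 else homeDay d a p.1)) ∧
    (∀ b : Fin (3 * d),
      Function.Bijective (fun p : Fin (3 * d) × Bool =>
        if p.2 then awayDay d p.1 b else homeDay d p.1 b)) ∧
    (∀ a b : Fin (3 * d),
      homeDay d a b ≠ awayDay d a b + 1 ∧ awayDay d a b ≠ homeDay d a b + 1) ∧
    (∀ a : Fin (3 * d), ∀ D : ZMod (6 * d),
      ¬ (∀ k : Fin 4, ∃ b, homeDay d a b = D + ((k : ℕ) : ZMod (6 * d)))) ∧
    (∀ a : Fin (3 * d), ∀ D : ZMod (6 * d),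
      ¬ (∀ k : Fin 4, ∃ b, awayDay d a b = D + ((k : ℕ) : ZMod (6 * d)))) ∧
    (∀ b : Fin (3 * d), ∀ D : ZMod (6 * d),
      ¬ (∀ k : Fin 4, ∃ a, awayDay d a b = D + ((k : ℕ) : ZMod (6 * d)))) ∧
    (∀ b : Fin (3 * d), ∀ D : ZMod (6 * d),
      ¬ (∀ k : Fin 4, ∃ a, homeDay d a b = D + ((k : ℕ) : ZMod (6 * d)))) := by
  refine ⟨fun a => bij d hd a, fun b => ?_, fun a b => ⟨?_, ?_⟩, fun a => no4 d
      ((((a : ℕ) % 3 : ℕ) : ZMod 6) + 3) _ (fun x => ?_), fun a => no4 d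
      ((((a : ℕ) % 3 : ℕ) : ZMod 6)) _ (fun x => ?_), fun b => no4 d
      ((((b : ℕ) % 3 : ℕ) : ZMod 6)) _ (fun x => ?_), fun b => no4 d
      ((((b : ℕ) % 3 : ℕ) : ZMod 6) + 3) _ (fun x => ?_)⟩
  · have he : (fun p : Fin (3 * d) × Bool =>
        if p.2 then awayDay d p.1 b else homeDay d p.1 b) =
        (fun p : Fin (3 * d) × Bool =>
        if p.2 then awayDay d b p.1 else homeDay d b p.1) := by
      funext p
      simp only [homeDay, away_comm d p.1 b]
    rw [he]
    exact bij d hd b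
  · intro h
    apply_fun toZ6 d at h
    simp only [map_add, phi_home, phi_away, map_one] at h
    have : (3 : ZMod 6) = 1 := by linear_combination h
    exact absurd this (by decide)
  · intro h
    apply_fun toZ6 d at h
    simp only [map_add, phi_home, phi_away, map_one] at h
    have : (0 : ZMod 6) = 4 := by linear_combination h
    exact absurd this (by decide)
  · rw [phi_home]; push_cast; ring
  · rw [phi_away]; push_cast; ring
  · rw [phi_away]; push_cast; ring
  · rw [phi_home]; push_cast; ring
end
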